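/- arXiv:1701.00501 — 2 statements merged into one kernel-verified Lean document; each statement's English description precedes it below -/
import Mathlib

section
/- For real a > 0, b, and c, the complex Laplace transform ∫₀^∞ e^{−k(a − i c)} J₀(b k) dk = 1/√(b² + (a − i c)²), where the square root is the principal branch; this is the closed form of the X-wave solution Φ_X(t,x) = a₀/√((ρ sinη)² + (a₀ − i(z cosη − t))²) obtained from its Bessel integral representation. -/
open MeasureTheory Complex

open Set in
lemma integral_cexp_neg_mul_Ioi' {w : ℂ} (hw : 0 < w.re) :
    ∫ k in Set.Ioi (0:ℝ), Complex.exp (-(k:ℂ) * w) = w⁻¹ := by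
  have hw0 : w ≠ 0 := fun h => by simp [h] at hw
  have hint : IntegrableOn (fun k : ℝ => Complex.exp (-(k:ℂ) * w)) (Set.Ioi 0) := by
    refine (Integrable.mono' (g := fun k : ℝ => Real.exp (-w.re * k))
      (exp_neg_integrableOn_Ioi 0 hw) ?_ ?_)
    · exact (Continuous.aestronglyMeasurable (by continuity)).restrict
    · filter_upwards with k
      simp only [Complex.norm_exp]
      simp [neg_mul, mul_comm]
  have hderiv : ∀ k ∈ Set.Ici (0:ℝ),
      HasDerivAt (fun k : ℝ => -w⁻¹ * Complex.exp (-(k:ℂ) * w))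
        (Complex.exp (-(k:ℂ) * w)) k := by
    intro k _
    have h1 : HasDerivAt (fun k : ℝ => ((k:ℝ):ℂ)) 1 k := Complex.ofRealCLM.hasDerivAt
    have h2 : HasDerivAt (fun k : ℝ => -(k:ℂ) * w) (-w) k := by
      simpa using ((h1.neg).mul_const w)
    have h3 := h2.cexp
    have h4 := h3.const_mul (-w⁻¹)
    rw [mul_comm (Complex.exp _) (-w), ← mul_assoc, neg_mul_neg, inv_mul_cancel₀ hw0, one_mul] at h4
    exact h4
  have htends : Filter.Tendsto (fun k : ℝ => -w⁻¹ * Complex.exp (-(k:ℂ) * w))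
      Filter.atTop (nhds 0) := by
    rw [tendsto_zero_iff_norm_tendsto_zero]
    have : (fun k : ℝ => ‖-w⁻¹ * Complex.exp (-(k:ℂ) * w)‖)
        = fun k : ℝ => ‖w⁻¹‖ * Real.exp (-(w.re * k)) := by
      ext k
      simp [Complex.norm_exp, neg_mul, mul_comm]
    rw [this]
    rw [show (0:ℝ) = ‖w⁻¹‖ * 0 by ring]
    refine Filter.Tendsto.const_mul _ ?_
    apply Real.tendsto_exp_atBot.comp
    exact (Filter.tendsto_neg_atBot_iff.mpr (Filter.Tendsto.const_mul_atTop hw Filter.tendsto_id))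
  have := integral_Ioi_of_hasDerivAt_of_tendsto' hderiv hint htends
  rw [this]
  simp

open Set in

lemma re_cpow_half_pos {w : ℂ} (hw : 0 < w.re ∨ w.im ≠ 0) : 0 < (w ^ ((1:ℂ)/2)).re := by
  have hw0 : w ≠ 0 := by rintro rfl; simp at hw
  rw [Complex.cpow_def_of_ne_zero hw0, Complex.exp_re]
  apply mul_pos (Real.exp_pos _)
  have him : (Complex.log w * (1/2)).im = w.arg / 2 := by
    simp [Complex.log_im, Complex.mul_im, Complex.log_re]; ring
  rw [him]
  apply Real.cos_pos_of_mem_Ioo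
  constructor
  · have := Complex.neg_pi_lt_arg w; linarith
  · have h1 : w.arg ≤ Real.pi := Complex.arg_le_pi w
    have h2 : w.arg ≠ Real.pi := by
      intro h
      rw [Complex.arg_eq_pi_iff] at h
      rcases hw with h' | h'
      · linarith [h.1]
      · exact h' h.2
    have := lt_of_le_of_ne h1 h2
    linarith [Real.pi_pos]

lemma sq_cpow_half {w : ℂ} (hw : w ≠ 0) : (w ^ ((1:ℂ)/2))^2 = w := by
  rw [sq, ← Complex.cpow_add _ _ hw]; norm_num

lemma integral_inv_sub_cos {s : ℂ} (b : ℝ) (hs : 0 < s.re) :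
    ∫ θ in (0:ℝ)..(2*Real.pi), (s - Complex.I * b * Real.cos θ)⁻¹
      = 2 * Real.pi / ((s^2 + (b:ℂ)^2) ^ ((1:ℂ)/2)) := by
  set w : ℂ := s^2 + (b:ℂ)^2 with hw_def
  have him_w : w.im = 2 * s.re * s.im := by
    simp [hw_def, Complex.add_im, sq, Complex.mul_im]; ring
  have hre_w : w.re = s.re^2 - s.im^2 + b^2 := by
    simp [hw_def, Complex.add_re, sq, Complex.mul_re]
  have hs_ne : s ≠ 0 := fun h => by simp [h] at hs
  have hw_or : 0 < w.re ∨ w.im ≠ 0 := by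
    by_cases h : s.im = 0
    · left; rw [hre_w, h]; nlinarith
    · right; rw [him_w]; positivity
  have hw_ne : w ≠ 0 := by
    rintro h
    rcases hw_or with h' | h' <;> simp [h] at h'
  set r : ℂ := w ^ ((1:ℂ)/2) with hr_def
  have hr_re : 0 < r.re := re_cpow_half_pos hw_or
  have hr_sq : r^2 = w := sq_cpow_half hw_ne
  have hr_sq' : r^2 = s^2 + (b:ℂ)^2 := by rw [hr_sq]
  have hr_ne : r ≠ 0 := fun h => by simp [h] at hr_re
  have him_r : r.re * r.im = s.re * s.im := by
    have h := congrArg Complex.im hr_sq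
    rw [him_w] at h
    simp [sq, Complex.mul_im] at h
    linarith
  by_cases hb : b = 0
  · -- b = 0 : r = s and integral of constant
    have hrs : r = s := by
      have h1 : (r - s) * (r + s) = 0 := by
        have h2 : r^2 = s^2 := by rw [hr_sq', hb]; simp
        linear_combination h2
      rcases mul_eq_zero.mp h1 with h | h
      · exact sub_eq_zero.mp h
      · exfalso
        have h3 : (r + s).re = 0 := by rw [h]; simp
        simp [Complex.add_re] at h3
        linarith
    rw [hb]
    simp only [Complex.ofReal_zero, mul_zero, zero_mul, sub_zero]
    rw [intervalIntegral.integral_const, hrs]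
    simp [div_eq_mul_inv]
  · have hbC : (b:ℂ) ≠ 0 := Complex.ofReal_ne_zero.mpr hb
    have hb2 : ((b:ℂ)^2) ≠ 0 := pow_ne_zero _ hbC
    set z₁ : ℂ := Complex.I * (r - s) / b with hz₁_def
    set z₂ : ℂ := -Complex.I * (r + s) / b with hz₂_def
    have h1 : (b:ℂ) * z₁ = Complex.I * (r - s) := by
      rw [hz₁_def]; field_simp
    have h2 : (b:ℂ) * z₂ = -Complex.I * (r + s) := by
      rw [hz₂_def]; field_simp
    have hkey : ∀ z : ℂ, ((b:ℂ)/2) * (z - z₁) * (z - z₂)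
        = ((b:ℂ)/2) * z^2 + Complex.I * s * z + (b:ℂ)/2 := by
      intro z
      apply mul_left_cancel₀ hb2
      have e1 : (b:ℂ)^2 * (((b:ℂ)/2) * (z - z₁) * (z - z₂))
          = ((b:ℂ)/2) * (((b:ℂ)*z - (b:ℂ)*z₁) * ((b:ℂ)*z - (b:ℂ)*z₂)) := by ring
      rw [e1, h1, h2]
      linear_combination (-(b:ℂ)^3/2) * Complex.I_sq + (-(Complex.I^2)*(b:ℂ)/2) * hr_sq'
    have hz₁z₂ : z₁ * z₂ = 1 := by
      apply mul_left_cancel₀ hb2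
      have e1 : (b:ℂ)^2 * (z₁ * z₂) = ((b:ℂ)*z₁) * ((b:ℂ)*z₂) := by ring
      rw [e1, h1, h2]
      linear_combination (-(b:ℂ)^2) * Complex.I_sq + (-(Complex.I^2)) * hr_sq'
    -- |r - s| < |r + s|
    have habs_lt : ‖r - s‖ < ‖r + s‖ := by
      have h4 : Complex.normSq (r + s) - Complex.normSq (r - s)
          = 4 * (r.re * s.re + r.im * s.im) := by
        simp only [Complex.normSq_apply, Complex.add_re, Complex.add_im, Complex.sub_re,
          Complex.sub_im]
        ring
      have hpos : 0 < r.re * s.re + r.im * s.im := by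
        have h5 : r.im = s.re * s.im / r.re := by field_simp; linarith
        rw [h5]
        have h6 : r.re * s.re + s.re * s.im / r.re * s.im
            = s.re * (r.re^2 + s.im^2) / r.re := by field_simp
        rw [h6]
        positivity
      nlinarith [norm_nonneg (r + s), norm_nonneg (r - s),
        Complex.sq_norm (r + s), Complex.sq_norm (r - s)]
    have hbpos : 0 < ‖(b:ℂ)‖ := norm_pos_iff.mpr hbC
    have e₁ : ‖z₁‖ * ‖(b:ℂ)‖ = ‖r - s‖ := by
      rw [← norm_mul, mul_comm, h1]
      simp
    have e₂ : ‖z₂‖ * ‖(b:ℂ)‖ = ‖r + s‖ := by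
      rw [← norm_mul, mul_comm, h2]
      simp
    have hlt : ‖z₁‖ < ‖z₂‖ := by nlinarith
    have hprod1 : ‖z₁‖ * ‖z₂‖ = 1 := by
      rw [← norm_mul, hz₁z₂, norm_one]
    have habs₁ : ‖z₁‖ < 1 := by nlinarith [norm_nonneg z₁]
    have habs₂ : 1 < ‖z₂‖ := by nlinarith [norm_nonneg z₁]
    -- Cauchy integral formula
    set f : ℂ → ℂ := fun z => (((b:ℂ)/2) * (z - z₂))⁻¹ with hf_def
    have hb2' : ((b:ℂ)/2) ≠ 0 := by simpa using hbC
    have hne₂ : ∀ z ∈ Metric.closedBall (0:ℂ) 1, ((b:ℂ)/2) * (z - z₂) ≠ 0 := by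
      intro z hz
      apply mul_ne_zero hb2'
      intro h
      have hzz : z = z₂ := sub_eq_zero.mp h
      rw [Metric.mem_closedBall, dist_zero_right, hzz] at hz
      linarith
    have hfd : DifferentiableOn ℂ f (Metric.closedBall 0 1) := by
      apply DifferentiableOn.inv
      · exact (((differentiable_id.sub_const z₂).const_mul _).differentiableOn)
      · exact hne₂
    have hz₁mem : z₁ ∈ Metric.ball (0:ℂ) 1 := by
      rw [Metric.mem_ball, dist_zero_right]; exact habs₁
    have hcauchy := hfd.circleIntegral_sub_inv_smul hz₁mem
    have hval : ((b:ℂ)/2) * (z₁ - z₂) = Complex.I * r := by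
      have h3 : (b:ℂ) * (z₁ - z₂) = 2*Complex.I*r := by
        rw [mul_sub, h1, h2]; ring
      linear_combination h3/2
    have hval2 : ((2:ℂ) * (Real.pi:ℂ) * Complex.I) • f z₁ = 2*(Real.pi:ℂ)/r := by
      rw [hf_def]
      simp only [smul_eq_mul]
      rw [hval]
      field_simp
    have hD_ne : ∀ θ : ℝ, s - Complex.I * (b:ℂ) * (Real.cos θ : ℂ) ≠ 0 := by
      intro θ h
      have h4 : (s - Complex.I * (b:ℂ) * (Real.cos θ : ℂ)).re = 0 := by rw [h]; simp
      simp only [Complex.sub_re, Complex.mul_re, Complex.mul_im, Complex.I_re, Complex.I_im,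
        Complex.ofReal_re, Complex.ofReal_im] at h4
      simp at h4
      linarith
    have hmain : ∫ θ in (0:ℝ)..(2*Real.pi), (s - Complex.I * b * Real.cos θ)⁻¹
        = ∮ z in C(0,1), (z - z₁)⁻¹ • f z := by
      rw [circleIntegral]
      apply intervalIntegral.integral_congr
      intro θ _
      simp only [deriv_circleMap]
      set z : ℂ := circleMap 0 1 θ with hz_def
      have hz_eq : z = Complex.exp (θ * Complex.I) := by simp [hz_def, circleMap]
      have habs_z : ‖z‖ = 1 := by simp [hz_def]
      have hz_ne0 : z ≠ 0 := by rw [hz_eq]; exact Complex.exp_ne_zero _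
      have hzz : z * z⁻¹ = 1 := mul_inv_cancel₀ hz_ne0
      have hcos : ((Real.cos θ : ℝ) : ℂ) = (z + z⁻¹)/2 := by
        rw [hz_eq, Complex.ofReal_cos, Complex.cos, ← Complex.exp_neg, neg_mul]
      have hq : z * Complex.I * (s - Complex.I*(b:ℂ)*((z+z⁻¹)/2))
          = ((b:ℂ)/2)*z^2 + Complex.I*s*z + (b:ℂ)/2 := by
        linear_combination (-(b:ℂ)*z^2/2 - (b:ℂ)/2) * Complex.I_sq
          + (-(Complex.I^2)*(b:ℂ)/2) * hzz
      have hq2 : ((b:ℂ)/2) * (z - z₁) * (z - z₂)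
          = z * Complex.I * (s - Complex.I*(b:ℂ)*(Real.cos θ : ℂ)) := by
        rw [hkey z, hcos, hq]
      have hzI_ne : z * Complex.I ≠ 0 := mul_ne_zero hz_ne0 Complex.I_ne_zero
      have hz₁_ne : z - z₁ ≠ 0 := by
        intro h
        have : z = z₁ := sub_eq_zero.mp h
        rw [← this, habs_z] at habs₁
        exact lt_irrefl _ habs₁
      have hz₂_ne : ((b:ℂ)/2) * (z - z₂) ≠ 0 := by
        apply mul_ne_zero hb2'
        intro h
        have : z = z₂ := sub_eq_zero.mp h
        rw [← this, habs_z] at habs₂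
        exact lt_irrefl _ habs₂
      simp only [smul_eq_mul, hf_def]
      rw [eq_comm, ← mul_inv]
      have e2 : (z - z₁) * (((b:ℂ)/2) * (z - z₂)) = z * Complex.I * (s - Complex.I*(b:ℂ)*(Real.cos θ : ℂ)) := by
        rw [← hq2]; ring
      rw [e2, mul_inv, ← mul_assoc, mul_inv_cancel₀ hzI_ne, one_mul]
    rw [hmain, hcauchy, ← hz₁_def] at *
    rw [hval2]

/-- The Bessel function of the first kind of order zero,
`J₀(x) = (1/2π) ∫₀^{2π} e^{i x cos θ} dθ`. -/
noncomputable def besselJ0 (x : ℝ) : ℂ :=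
  (1 / (2 * Real.pi) : ℝ) • ∫ θ in (0:ℝ)..(2 * Real.pi),
    Complex.exp (Complex.I * (x : ℂ) * (Real.cos θ : ℂ))

/-- Complex Laplace transform of `J₀`: for real `a > 0`, `b`, `c`,
`∫₀^∞ e^{−k(a − ic)} J₀(bk) dk = 1/√(b² + (a − ic)²)` (principal branch);
this is the closed form of the X-wave `Φ_X` from its Bessel integral
representation. -/
theorem complex_laplace_besselJ0 (a b c : ℝ) (ha : 0 < a) :
    ∫ k in Set.Ioi (0:ℝ),
        Complex.exp (-(k : ℂ) * ((a : ℂ) - (c : ℂ) * Complex.I)) * besselJ0 (b * k)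
      = 1 / (((b : ℂ)^2 + ((a : ℂ) - (c : ℂ) * Complex.I)^2) ^ ((1:ℂ)/2)) := by
  set s : ℂ := (a:ℂ) - (c:ℂ) * Complex.I with hs_def
  have hs_re : s.re = a := by simp [hs_def]
  have hs : 0 < s.re := by rw [hs_re]; exact ha
  have h2pi : (0:ℝ) < 2 * Real.pi := by positivity
  have hre_inner : ∀ θ : ℝ, (s - Complex.I * (b:ℝ) * (Real.cos θ : ℂ)).re = a := by
    intro θ
    simp [Complex.sub_re, Complex.mul_re, hs_re]
  -- pointwise rewrite of the integrand
  have step1 : ∀ k : ℝ, Complex.exp (-(k:ℂ) * s) * besselJ0 (b * k)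
      = (1 / (2 * Real.pi) : ℝ) • ∫ θ in (0:ℝ)..(2*Real.pi),
          Complex.exp (-(k:ℂ) * (s - Complex.I * (b:ℝ) * (Real.cos θ : ℂ))) := by
    intro k
    rw [besselJ0, mul_smul_comm, ← intervalIntegral.integral_const_mul]
    congr 1
    apply intervalIntegral.integral_congr
    intro θ _
    simp only [← Complex.exp_add]
    congr 1
    push_cast
    ring
  -- integrability on the product
  have hFint : Integrable (Function.uncurry fun (k : ℝ) (θ : ℝ) =>
      Complex.exp (-(k:ℂ) * (s - Complex.I * (b:ℝ) * (Real.cos θ : ℂ))))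
      ((volume.restrict (Set.Ioi 0)).prod (volume.restrict (Set.Ioc 0 (2*Real.pi)))) := by
    have hcont : Continuous (Function.uncurry fun (k : ℝ) (θ : ℝ) =>
        Complex.exp (-(k:ℂ) * (s - Complex.I * (b:ℝ) * (Real.cos θ : ℂ)))) := by
      apply Complex.continuous_exp.comp
      fun_prop
    refine Integrable.mono' (g := fun p : ℝ × ℝ => Real.exp (-a * p.1) * 1) ?_
      hcont.aestronglyMeasurable ?_
    · exact Integrable.mul_prod (exp_neg_integrableOn_Ioi 0 ha) (integrable_const 1)
    · filter_upwards with p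
      rw [Function.uncurry]
      simp only [Complex.norm_exp, mul_one]
      have hre : (-(p.1:ℂ) * (s - Complex.I * (b:ℝ) * (Real.cos p.2 : ℂ))).re = -a * p.1 := by
        rw [Complex.mul_re]
        simp [hre_inner p.2]
        rw [hs_re]; ring
      rw [hre]
  -- main computation
  calc ∫ k in Set.Ioi (0:ℝ), Complex.exp (-(k:ℂ) * s) * besselJ0 (b * k)
      = ∫ k in Set.Ioi (0:ℝ), (1 / (2 * Real.pi) : ℝ) • ∫ θ in Set.Ioc (0:ℝ) (2*Real.pi),
          Complex.exp (-(k:ℂ) * (s - Complex.I * (b:ℝ) * (Real.cos θ : ℂ))) := by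
        simp only [step1, intervalIntegral.integral_of_le h2pi.le]
    _ = (1 / (2 * Real.pi) : ℝ) • ∫ k in Set.Ioi (0:ℝ), ∫ θ in Set.Ioc (0:ℝ) (2*Real.pi),
          Complex.exp (-(k:ℂ) * (s - Complex.I * (b:ℝ) * (Real.cos θ : ℂ))) := by
        rw [integral_smul]
    _ = (1 / (2 * Real.pi) : ℝ) • ∫ θ in Set.Ioc (0:ℝ) (2*Real.pi), ∫ k in Set.Ioi (0:ℝ),
          Complex.exp (-(k:ℂ) * (s - Complex.I * (b:ℝ) * (Real.cos θ : ℂ))) := by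
        rw [MeasureTheory.integral_integral_swap hFint]
    _ = (1 / (2 * Real.pi) : ℝ) • ∫ θ in Set.Ioc (0:ℝ) (2*Real.pi),
          (s - Complex.I * (b:ℝ) * (Real.cos θ : ℂ))⁻¹ := by
        congr 1
        apply MeasureTheory.setIntegral_congr_fun measurableSet_Ioc
        intro θ _
        exact integral_cexp_neg_mul_Ioi' (by rw [hre_inner θ]; exact ha)
    _ = (1 / (2 * Real.pi) : ℝ) • (2 * Real.pi / ((s^2 + (b:ℂ)^2) ^ ((1:ℂ)/2))) := by
        rw [← intervalIntegral.integral_of_le h2pi.le, integral_inv_sub_cos b hs]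
    _ = 1 / (((b:ℂ)^2 + s^2) ^ ((1:ℂ)/2)) := by
        rw [add_comm ((b:ℂ)^2) (s^2)]
        rw [Complex.real_smul]
        push_cast
        have h2pic : ((2:ℂ) * (Real.pi:ℂ)) ≠ 0 :=
          mul_ne_zero two_ne_zero (Complex.ofReal_ne_zero.mpr Real.pi_ne_zero)
        rw [div_mul_div_comm, one_mul, div_mul_cancel_left₀ h2pic]
        exact (one_div _).symm
end

section
/- The focus-wave-mode function Φ(t,ρ,z) = e^{iβ(z+t)} · exp(−ρ²β/(z₀ + i(z − t))) / (z₀ + i(z − t)), with parameters β > 0 and z₀ > 0, satisfies the homogeneous wave equation ∂ₜ²Φ = ∂ρ²Φ + (1/ρ)∂ρΦ + ∂z²Φ for all t ∈ ℝ, ρ > 0, z ∈ ℝ. -/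
noncomputable section
open Complex

/-- Brittingham's focus wave mode
`Φ(t,ρ,z) = e^{iβ(z+t)} exp(−ρ²β/(z₀ + i(z−t)))/(z₀ + i(z−t))`. -/
def fwm (β z₀ t ρ z : ℝ) : ℂ :=
  Complex.exp (Complex.I * (β : ℂ) * ((z + t : ℝ) : ℂ)) *
    Complex.exp (-(((ρ^2 * β : ℝ) : ℂ) / ((z₀ : ℂ) + Complex.I * ((z - t : ℝ) : ℂ)))) /
    ((z₀ : ℂ) + Complex.I * ((z - t : ℝ) : ℂ))

namespace FwmAux

def W (z₀ t z : ℝ) : ℂ := (z₀:ℂ) + I * ((z:ℂ) - (t:ℂ))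

lemma W_ne {z₀ : ℝ} (hz₀ : 0 < z₀) (t z : ℝ) : W z₀ t z ≠ 0 := by
  intro h
  have h2 := congrArg Complex.re h
  simp [W] at h2
  linarith

lemma fwm_eq (β z₀ t ρ z : ℝ) :
    fwm β z₀ t ρ z =
      Complex.exp (I * (β:ℂ) * ((z:ℂ) + (t:ℂ))) *
        Complex.exp (-((ρ:ℂ)^2 * (β:ℂ)) / W z₀ t z) / W z₀ t z := by
  simp only [fwm, W]
  push_cast
  ring_nf

lemma hasDerivAt_coe (s : ℝ) : HasDerivAt (fun y : ℝ => (y:ℂ)) 1 s := by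
  exact Complex.ofRealCLM.hasDerivAt (x := s)

lemma hasDerivAt_W_t (z₀ z s : ℝ) : HasDerivAt (fun s : ℝ => W z₀ s z) (-I) s := by
  have h := (((hasDerivAt_coe s).const_sub ((z:ℂ))).const_mul I).const_add ((z₀:ℂ))
  simpa [W] using h

lemma hasDerivAt_W_z (z₀ t s : ℝ) : HasDerivAt (fun s : ℝ => W z₀ t s) I s := by
  have h := (((hasDerivAt_coe s).sub_const ((t:ℂ))).const_mul I).const_add ((z₀:ℂ))
  simpa [W] using h

/-! ### t direction -/

lemma hasDerivAt_fwm_t (β z₀ ρ z : ℝ) (hz₀ : 0 < z₀) (s : ℝ) :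
    HasDerivAt (fun s : ℝ => fwm β z₀ s ρ z)
      (fwm β z₀ s ρ z *
        (I*(β:ℂ) - I*((ρ:ℂ)^2*(β:ℂ))/(W z₀ s z)^2 + I/(W z₀ s z))) s := by
  have hW := hasDerivAt_W_t z₀ z s
  have hWne : W z₀ s z ≠ 0 := W_ne hz₀ s z
  have hA := (((hasDerivAt_coe s).const_add ((z:ℂ))).const_mul (I*(β:ℂ))).cexp
  have hB := ((hasDerivAt_const s (-((ρ:ℂ)^2*(β:ℂ)))).div hW hWne).cexp
  have h := (hA.mul hB).div hW hWne
  simp only [fwm_eq]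
  refine h.congr_deriv ?_
  simp only [Pi.mul_apply, Pi.div_apply]
  field_simp
  ring

lemma hasDerivAt2_fwm_t (β z₀ ρ z : ℝ) (hz₀ : 0 < z₀) (t : ℝ) :
    HasDerivAt (fun s : ℝ => fwm β z₀ s ρ z *
        (I*(β:ℂ) - I*((ρ:ℂ)^2*(β:ℂ))/(W z₀ s z)^2 + I/(W z₀ s z)))
      (fwm β z₀ t ρ z *
        ((I*(β:ℂ) - I*((ρ:ℂ)^2*(β:ℂ))/(W z₀ t z)^2 + I/(W z₀ t z))^2
          - 2*I^2*((ρ:ℂ)^2*(β:ℂ))/(W z₀ t z)^3 + I^2/(W z₀ t z)^2)) t := by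
  have hW := hasDerivAt_W_t z₀ z t
  have hWne : W z₀ t z ≠ 0 := W_ne hz₀ t z
  have hf := hasDerivAt_fwm_t β z₀ ρ z hz₀ t
  have hW2 : HasDerivAt (fun s : ℝ => (W z₀ s z)^2)
      (-I * W z₀ t z + W z₀ t z * -I) t := by
    simpa [pow_two, Pi.mul_def] using hW.mul hW
  have hS := ((hasDerivAt_const t (I*(β:ℂ))).sub
      ((hasDerivAt_const t (I*((ρ:ℂ)^2*(β:ℂ)))).div hW2 (pow_ne_zero 2 hWne))).add
    ((hasDerivAt_const t I).div hW hWne)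
  have hS' : HasDerivAt (fun s : ℝ =>
        I*(β:ℂ) - I*((ρ:ℂ)^2*(β:ℂ))/(W z₀ s z)^2 + I/(W z₀ s z))
      (-(2*I^2*((ρ:ℂ)^2*(β:ℂ))/(W z₀ t z)^3) + I^2/(W z₀ t z)^2) t := by
    refine hS.congr_deriv ?_
    field_simp
    ring_nf
  have h := hf.mul hS'
  refine h.congr_deriv ?_
  ring

lemma iteratedDeriv2_t (β z₀ t ρ z : ℝ) (hz₀ : 0 < z₀) :
    iteratedDeriv 2 (fun s => fwm β z₀ s ρ z) t
      = fwm β z₀ t ρ z *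
        ((I*(β:ℂ) - I*((ρ:ℂ)^2*(β:ℂ))/(W z₀ t z)^2 + I/(W z₀ t z))^2
          - 2*I^2*((ρ:ℂ)^2*(β:ℂ))/(W z₀ t z)^3 + I^2/(W z₀ t z)^2) := by
  rw [iteratedDeriv_succ, iteratedDeriv_one]
  have h1 : deriv (fun s => fwm β z₀ s ρ z)
      = fun s => fwm β z₀ s ρ z *
        (I*(β:ℂ) - I*((ρ:ℂ)^2*(β:ℂ))/(W z₀ s z)^2 + I/(W z₀ s z)) :=
    funext fun s => (hasDerivAt_fwm_t β z₀ ρ z hz₀ s).deriv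
  rw [h1]
  exact (hasDerivAt2_fwm_t β z₀ ρ z hz₀ t).deriv

/-! ### z direction -/

lemma hasDerivAt_fwm_z (β z₀ t ρ : ℝ) (hz₀ : 0 < z₀) (s : ℝ) :
    HasDerivAt (fun s : ℝ => fwm β z₀ t ρ s)
      (fwm β z₀ t ρ s *
        (I*(β:ℂ) + I*((ρ:ℂ)^2*(β:ℂ))/(W z₀ t s)^2 - I/(W z₀ t s))) s := by
  have hW := hasDerivAt_W_z z₀ t s
  have hWne : W z₀ t s ≠ 0 := W_ne hz₀ t s
  have hA := (((hasDerivAt_coe s).add_const ((t:ℂ))).const_mul (I*(β:ℂ))).cexp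
  have hB := ((hasDerivAt_const s (-((ρ:ℂ)^2*(β:ℂ)))).div hW hWne).cexp
  have h := (hA.mul hB).div hW hWne
  simp only [fwm_eq]
  refine h.congr_deriv ?_
  simp only [Pi.mul_apply, Pi.div_apply]
  field_simp
  ring

lemma hasDerivAt2_fwm_z (β z₀ t ρ : ℝ) (hz₀ : 0 < z₀) (z : ℝ) :
    HasDerivAt (fun s : ℝ => fwm β z₀ t ρ s *
        (I*(β:ℂ) + I*((ρ:ℂ)^2*(β:ℂ))/(W z₀ t s)^2 - I/(W z₀ t s)))
      (fwm β z₀ t ρ z *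
        ((I*(β:ℂ) + I*((ρ:ℂ)^2*(β:ℂ))/(W z₀ t z)^2 - I/(W z₀ t z))^2
          - 2*I^2*((ρ:ℂ)^2*(β:ℂ))/(W z₀ t z)^3 + I^2/(W z₀ t z)^2)) z := by
  have hW := hasDerivAt_W_z z₀ t z
  have hWne : W z₀ t z ≠ 0 := W_ne hz₀ t z
  have hf := hasDerivAt_fwm_z β z₀ t ρ hz₀ z
  have hW2 : HasDerivAt (fun s : ℝ => (W z₀ t s)^2)
      (I * W z₀ t z + W z₀ t z * I) z := by
    simpa [pow_two, Pi.mul_def] using hW.mul hW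
  have hS := ((hasDerivAt_const z (I*(β:ℂ))).add
      ((hasDerivAt_const z (I*((ρ:ℂ)^2*(β:ℂ)))).div hW2 (pow_ne_zero 2 hWne))).sub
    ((hasDerivAt_const z I).div hW hWne)
  have hS' : HasDerivAt (fun s : ℝ =>
        I*(β:ℂ) + I*((ρ:ℂ)^2*(β:ℂ))/(W z₀ t s)^2 - I/(W z₀ t s))
      (-(2*I^2*((ρ:ℂ)^2*(β:ℂ))/(W z₀ t z)^3) + I^2/(W z₀ t z)^2) z := by
    refine hS.congr_deriv ?_
    field_simp
    ring_nf
  have h := hf.mul hS'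
  refine h.congr_deriv ?_
  ring

lemma iteratedDeriv2_z (β z₀ t ρ z : ℝ) (hz₀ : 0 < z₀) :
    iteratedDeriv 2 (fun s => fwm β z₀ t ρ s) z
      = fwm β z₀ t ρ z *
        ((I*(β:ℂ) + I*((ρ:ℂ)^2*(β:ℂ))/(W z₀ t z)^2 - I/(W z₀ t z))^2
          - 2*I^2*((ρ:ℂ)^2*(β:ℂ))/(W z₀ t z)^3 + I^2/(W z₀ t z)^2) := by
  rw [iteratedDeriv_succ, iteratedDeriv_one]
  have h1 : deriv (fun s => fwm β z₀ t ρ s)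
      = fun s => fwm β z₀ t ρ s *
        (I*(β:ℂ) + I*((ρ:ℂ)^2*(β:ℂ))/(W z₀ t s)^2 - I/(W z₀ t s)) :=
    funext fun s => (hasDerivAt_fwm_z β z₀ t ρ hz₀ s).deriv
  rw [h1]
  exact (hasDerivAt2_fwm_z β z₀ t ρ hz₀ z).deriv

/-! ### ρ direction -/

lemma hasDerivAt_fwm_ρ (β z₀ t z : ℝ) (hz₀ : 0 < z₀) (r : ℝ) :
    HasDerivAt (fun r : ℝ => fwm β z₀ t r z)
      (fwm β z₀ t r z * (-2*(r:ℂ)*(β:ℂ)/(W z₀ t z))) r := by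
  have hWne : W z₀ t z ≠ 0 := W_ne hz₀ t z
  have hB := (((((hasDerivAt_pow 2 ((r:ℂ))).comp_ofReal).mul_const ((β:ℂ))).neg).div_const
      (W z₀ t z)).cexp
  have h := (hB.const_mul (Complex.exp (I * (β:ℂ) * ((z:ℂ) + (t:ℂ))))).div_const (W z₀ t z)
  simp only [fwm_eq]
  refine h.congr_deriv ?_
  simp only [Pi.neg_apply]
  ring

lemma hasDerivAt2_fwm_ρ (β z₀ t z : ℝ) (hz₀ : 0 < z₀) (ρ : ℝ) :
    HasDerivAt (fun r : ℝ => fwm β z₀ t r z * (-2*(r:ℂ)*(β:ℂ)/(W z₀ t z)))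
      (fwm β z₀ t ρ z *
        ((-2*(ρ:ℂ)*(β:ℂ)/(W z₀ t z))^2 - 2*(β:ℂ)/(W z₀ t z))) ρ := by
  have hWne : W z₀ t z ≠ 0 := W_ne hz₀ t z
  have hf := hasDerivAt_fwm_ρ β z₀ t z hz₀ ρ
  have hS := (((hasDerivAt_coe ρ).const_mul ((-2:ℂ))).mul_const ((β:ℂ))).div_const (W z₀ t z)
  have h := hf.mul hS
  refine h.congr_deriv ?_
  ring

lemma iteratedDeriv2_ρ (β z₀ t ρ z : ℝ) (hz₀ : 0 < z₀) :
    iteratedDeriv 2 (fun r => fwm β z₀ t r z) ρ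
      = fwm β z₀ t ρ z *
        ((-2*(ρ:ℂ)*(β:ℂ)/(W z₀ t z))^2 - 2*(β:ℂ)/(W z₀ t z)) := by
  rw [iteratedDeriv_succ, iteratedDeriv_one]
  have h1 : deriv (fun r => fwm β z₀ t r z)
      = fun r => fwm β z₀ t r z * (-2*(r:ℂ)*(β:ℂ)/(W z₀ t z)) :=
    funext fun r => (hasDerivAt_fwm_ρ β z₀ t z hz₀ r).deriv
  rw [h1]
  exact (hasDerivAt2_fwm_ρ β z₀ t z hz₀ ρ).deriv

end FwmAux

open FwmAux in
/-- The focus wave mode satisfies the homogeneous wave equation in cylindrical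
coordinates: `∂ₜ²Φ = ∂ρ²Φ + (1/ρ)∂ρΦ + ∂z²Φ` for all `t`, `ρ > 0`, `z`. -/
theorem fwm_wave_equation (β z₀ : ℝ) (hβ : 0 < β) (hz₀ : 0 < z₀) :
    ∀ (t : ℝ) (ρ : ℝ) (z : ℝ), 0 < ρ →
      iteratedDeriv 2 (fun s => fwm β z₀ s ρ z) t
        = iteratedDeriv 2 (fun r => fwm β z₀ t r z) ρ
          + ((1 / ρ : ℝ) : ℂ) * deriv (fun r => fwm β z₀ t r z) ρ
          + iteratedDeriv 2 (fun w => fwm β z₀ t ρ w) z := by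
  intro t ρ z hρ
  have hWne : W z₀ t z ≠ 0 := W_ne hz₀ t z
  have hρ' : (ρ:ℂ) ≠ 0 := by exact_mod_cast hρ.ne'
  rw [iteratedDeriv2_t β z₀ t ρ z hz₀, iteratedDeriv2_ρ β z₀ t ρ z hz₀,
    iteratedDeriv2_z β z₀ t ρ z hz₀, (hasDerivAt_fwm_ρ β z₀ t z hz₀ ρ).deriv]
  push_cast
  simp only [Complex.I_sq]
  have key : (I*(β:ℂ) - I*((ρ:ℂ)^2*(β:ℂ))/(W z₀ t z)^2 + I/(W z₀ t z))^2
        + 2*((ρ:ℂ)^2*(β:ℂ))/(W z₀ t z)^3 - 1/(W z₀ t z)^2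
      = ((-2*(ρ:ℂ)*(β:ℂ)/(W z₀ t z))^2 - 2*(β:ℂ)/(W z₀ t z))
        + (1/(ρ:ℂ))*(-2*(ρ:ℂ)*(β:ℂ)/(W z₀ t z))
        + ((I*(β:ℂ) + I*((ρ:ℂ)^2*(β:ℂ))/(W z₀ t z)^2 - I/(W z₀ t z))^2
            + 2*((ρ:ℂ)^2*(β:ℂ))/(W z₀ t z)^3 - 1/(W z₀ t z)^2) := by
    generalize W z₀ t z = WW at hWne ⊢
    rw [← sub_eq_zero]
    field_simp
    ring_nf
    simp only [Complex.I_sq]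
    field_simp
    ring
  linear_combination (fwm β z₀ t ρ z) * key
end
end
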